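/- Let M be a faithful reduced multiplication R-module. Then for each a ∈ R, (0 :_M Ann_R(aM)) equals the intersection of all minimal prime submodules of M containing aM. -/

import Mathlib

variable {R : Type*} [CommRing R] {M : Type*} [AddCommGroup M] [Module R M]

/-- `M` is a multiplication module: every submodule is `IM` for some ideal `I`. -/
def IsMultiplicationModule (R M : Type*) [CommRing R] [AddCommGroup M] [Module R M] : Prop :=
  ∀ N : Submodule R M, ∃ I : Ideal R, N = I • (⊤ : Submodule R M)

/-- A prime submodule. -/
def Submodule.IsPrimeSubmodule (P : Submodule R M) : Prop :=
  P ≠ ⊤ ∧ ∀ (r : R) (m : M), r • m ∈ P → m ∈ P ∨ r ∈ P.colon ⊤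

/-- `M` is reduced: the intersection of all prime submodules is zero. -/
def IsReducedModule (R M : Type*) [CommRing R] [AddCommGroup M] [Module R M] : Prop :=
  sInf {P : Submodule R M | P.IsPrimeSubmodule} = ⊥

/-- A minimal prime submodule of `M`. -/
def Submodule.IsMinimalPrime (P : Submodule R M) : Prop :=
  P.IsPrimeSubmodule ∧ ∀ Q : Submodule R M, Q.IsPrimeSubmodule → Q ≤ P → Q = P

/-- `𝔓_K`: the intersection of all minimal prime submodules containing `K`
(equal to `M` if there are none). -/
def primeRad (K : Submodule R M) : Submodule R M :=
  sInf {P : Submodule R M | P.IsMinimalPrime ∧ K ≤ P}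

/-- `V(K)`: the set of minimal prime submodules containing `K`. -/
def Vset (K : Submodule R M) : Set (Submodule R M) :=
  {P : Submodule R M | P.IsMinimalPrime ∧ K ≤ P}

/-- A quasi `z°`-submodule. -/
def IsQuasiZSubmodule (N : Submodule R M) : Prop :=
  N ≠ ⊤ ∧ ∀ a ∈ N.colon ⊤, primeRad (Ideal.span {a} • (⊤ : Submodule R M)) ≤ N

/-- `𝔓_I` for an ideal: intersection of all minimal prime ideals of `R` containing `I`. -/
def idealPrimeRad (I : Ideal R) : Ideal R :=
  sInf {p : Ideal R | p ∈ minimalPrimes R ∧ I ≤ p}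

/-- A `z°`-ideal of `R`. -/
def IsZIdeal (I : Ideal R) : Prop :=
  I ≠ ⊤ ∧ ∀ a ∈ I, idealPrimeRad (Ideal.span {a}) ≤ I

/-- `(0 :_M J)` for an ideal `J`. -/
def pointAnn (J : Ideal R) : Submodule R M where
  carrier := {m : M | ∀ j ∈ J, j • m = 0}
  zero_mem' := by intro j _; simp
  add_mem' := by
    intro a b ha hb j hj
    rw [smul_add, ha j hj, hb j hj, add_zero]
  smul_mem' := by
    intro c m hm j hj
    rw [smul_comm, hm j hj, smul_zero]

/- ----------------- auxiliary lemmas ----------------- -/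

lemma mem_pointAnn {J : Ideal R} {x : M} :
    x ∈ (pointAnn J : Submodule R M) ↔ ∀ j ∈ J, j • x = 0 := Iff.rfl

/-- In a faithful reduced module's base ring, squares detect zero. -/
lemma sq_zero (hfaithful : (⊥ : Submodule R M).colon ⊤ = ⊥)
    (hred : IsReducedModule R M) (r : R) (h : r * r = 0) : r = 0 := by
  have hmem : ∀ P : Submodule R M, P.IsPrimeSubmodule → ∀ x : M, r • x ∈ P := by
    intro P hP x
    have h0 : r • (r • x) ∈ P := by
      rw [smul_smul, h, zero_smul]; exact P.zero_mem
    rcases hP.2 r (r • x) h0 with h1 | h1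
    · exact h1
    · exact Submodule.mem_colon.mp h1 x trivial
  have hr : r ∈ (⊥ : Submodule R M).colon ⊤ := by
    rw [Submodule.mem_colon]
    intro x _
    have hxx : r • x ∈ sInf {P : Submodule R M | P.IsPrimeSubmodule} :=
      Submodule.mem_sInf.mpr fun P hP => hmem P hP x
    rwa [hred] at hxx
  rwa [hfaithful, Submodule.mem_bot] at hr

lemma pow_zero_eq (hsq : ∀ r : R, r * r = 0 → r = 0) :
    ∀ (k : ℕ) (x : R), x ^ (k + 1) = 0 → x = 0 := by
  intro k
  induction k with
  | zero => intro x hx; rwa [pow_one] at hx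
  | succ k ih =>
    intro x hx
    apply ih
    apply hsq
    have h2 : x ^ (k + 1) * x ^ (k + 1) = x ^ (k + 1 + 1) * x ^ k := by ring
    rw [h2, hx, zero_mul]

/-- In a reduced ring, every element of a minimal prime is annihilated by
something outside the minimal prime. -/
lemma minPrime_ann (hsq : ∀ r : R, r * r = 0 → r = 0)
    {q : Ideal R} (hq : q ∈ minimalPrimes R) {t : R} (ht : t ∈ q) :
    ∃ d, d ∉ q ∧ d * t = 0 := by
  have hqp : q.IsPrime := hq.1.1
  have h1q : (1 : R) ∉ q := fun h => hqp.ne_top ((Ideal.eq_top_iff_one q).mpr h)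
  set S : Submonoid R :=
    { carrier := {x | ∃ c, c ∉ q ∧ ∃ n : ℕ, x = c * t ^ n}
      one_mem' := ⟨1, h1q, 0, by ring⟩
      mul_mem' := by
        rintro x y ⟨c, hc, n, rfl⟩ ⟨d, hd, m, rfl⟩
        exact ⟨c * d, fun h => ((hqp.mem_or_mem h).elim hc hd), n + m, by ring⟩ } with hS
  by_cases h0 : (0 : R) ∈ S
  · obtain ⟨c, hc, n, hcn⟩ := h0
    match n with
    | 0 =>
      rw [pow_zero, mul_one] at hcn
      exact absurd (hcn ▸ q.zero_mem) hc
    | k + 1 =>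
      refine ⟨c, hc, ?_⟩
      apply pow_zero_eq hsq k
      have h3 : (c * t) ^ (k + 1) = c ^ k * (c * t ^ (k + 1)) := by ring
      rw [h3, ← hcn, mul_zero]
  · have hdisj : Disjoint ((⊥ : Ideal R) : Set R) (S : Set R) := by
      rw [Set.disjoint_left]
      rintro x hx
      rw [SetLike.mem_coe, Ideal.mem_bot] at hx
      subst hx
      exact fun h => h0 h
    obtain ⟨q', hq', -, hdisj'⟩ := Ideal.exists_le_prime_disjoint ⊥ S hdisj
    have hq'q : q' ≤ q := by
      intro x hx
      by_contra hxq
      exact Set.disjoint_left.mp hdisj' hx ⟨x, hxq, 0, by ring⟩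
    have hle : q ≤ q' := hq.2 ⟨hq', bot_le⟩ hq'q
    have htS : t ∈ (S : Set R) := ⟨1, h1q, 1, by ring⟩
    exact absurd (hle ht) (fun h => Set.disjoint_left.mp hdisj' h htS)

lemma colon_isPrime {P : Submodule R M} (hP : P.IsPrimeSubmodule) :
    (P.colon ⊤).IsPrime := by
  constructor
  · intro h
    apply hP.1
    rw [eq_top_iff]
    intro x _
    have h1 := Submodule.mem_colon.mp (h ▸ Submodule.mem_top : (1 : R) ∈ P.colon ⊤) x trivial
    simpa using h1
  · intro r s hrs
    by_cases hs : s ∈ P.colon ⊤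
    · right; exact hs
    · left
      rw [Submodule.mem_colon] at hs
      push_neg at hs
      obtain ⟨x, -, hx⟩ := hs
      have hmem : r • (s • x) ∈ P := by
        rw [smul_smul]
        exact Submodule.mem_colon.mp hrs x trivial
      rcases hP.2 r (s • x) hmem with h | h
      · exact absurd h hx
      · exact h

/-- The kernel of localization at a prime `q`. -/
def locTorsion (q : Ideal R) (hq : q.IsPrime) : Submodule R M where
  carrier := {m : M | ∃ e, e ∉ q ∧ e • m = 0}
  zero_mem' := ⟨1, fun h => hq.ne_top ((Ideal.eq_top_iff_one q).mpr h), smul_zero 1⟩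
  add_mem' := by
    rintro m m' ⟨e, he, hem⟩ ⟨f, hf, hfm⟩
    refine ⟨e * f, fun h => (hq.mem_or_mem h).elim he hf, ?_⟩
    have h1 : (e * f) • m = 0 := by rw [mul_comm, mul_smul, hem, smul_zero]
    have h2 : (e * f) • m' = 0 := by rw [mul_smul, hfm, smul_zero]
    rw [smul_add, h1, h2, add_zero]
  smul_mem' := by
    rintro c m ⟨e, he, hem⟩
    exact ⟨e, he, by rw [smul_comm, hem, smul_zero]⟩

lemma mem_locTorsion {q : Ideal R} {hq : q.IsPrime} {m : M} :
    m ∈ (locTorsion q hq : Submodule R M) ↔ ∃ e, e ∉ q ∧ e • m = 0 := Iff.rfl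

/-- The colon ideal of a minimal prime submodule of a faithful multiplication
module is a minimal prime ideal. -/
lemma colon_mem_minimalPrimes (hfaithful : (⊥ : Submodule R M).colon ⊤ = ⊥)
    (hmul : IsMultiplicationModule R M) (hsq : ∀ r : R, r * r = 0 → r = 0)
    {P : Submodule R M} (hP : P.IsMinimalPrime) :
    P.colon ⊤ ∈ minimalPrimes R := by
  have hPp : P.IsPrimeSubmodule := hP.1
  have hp : (P.colon ⊤).IsPrime := colon_isPrime hPp
  haveI := hp
  obtain ⟨q, hq, hqle⟩ := Ideal.exists_minimalPrimes_le (I := ⊥) (J := P.colon ⊤) bot_le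
  have hqmin : q ∈ minimalPrimes R := hq
  have hqprime : q.IsPrime := hqmin.1.1
  set Q : Submodule R M := locTorsion q hqprime with hQdef
  -- Q ≤ P
  have hQP : Q ≤ P := by
    rintro m ⟨e, he, hem⟩
    obtain ⟨I, hI⟩ := hmul (Submodule.span R {m})
    have hIq : I ≤ q := by
      intro i hi
      have hann : ∀ x : M, (e * i) • x = 0 := by
        intro x
        have hix : i • x ∈ Submodule.span R {m} := by
          rw [hI]; exact Submodule.smul_mem_smul hi trivial
        obtain ⟨t, ht⟩ := Submodule.mem_span_singleton.mp hix
        rw [mul_smul, ← ht, smul_comm, hem, smul_zero]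
      have hbot : e * i ∈ (⊥ : Submodule R M).colon ⊤ :=
        Submodule.mem_colon.mpr fun x _ => by rw [Submodule.mem_bot]; exact hann x
      rw [hfaithful, Submodule.mem_bot] at hbot
      have : e * i ∈ q := hbot ▸ q.zero_mem
      exact (hqprime.mem_or_mem this).resolve_left he
    have hm : m ∈ (q : Ideal R) • (⊤ : Submodule R M) := by
      have hmm : m ∈ Submodule.span R {m} := Submodule.mem_span_singleton_self m
      rw [hI] at hmm
      exact Submodule.smul_mono_left hIq hmm
    have hqP : (q : Ideal R) • (⊤ : Submodule R M) ≤ P :=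
      Submodule.smul_le.mpr fun r hr x _ => Submodule.mem_colon.mp (hqle hr) x trivial
    exact hqP hm
  have hQtop : Q ≠ ⊤ := fun h => hPp.1 (top_unique (h ▸ hQP))
  have hqQ : (q : Ideal R) • (⊤ : Submodule R M) ≤ Q :=
    Submodule.smul_le.mpr fun t ht x _ =>
      let ⟨d, hd, hdt⟩ := minPrime_ann hsq hqmin ht
      ⟨d, hd, by rw [smul_smul, hdt, zero_smul]⟩
  have hQprime : Q.IsPrimeSubmodule := by
    refine ⟨hQtop, ?_⟩
    intro r m hrm
    by_cases hm : m ∈ Q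
    · left; exact hm
    · right
      obtain ⟨c, hc, hcrm⟩ := hrm
      obtain ⟨I, hI⟩ := hmul (Submodule.span R {m})
      have hInq : ¬I ≤ q := by
        intro hIq
        apply hm
        have hmI : m ∈ I • (⊤ : Submodule R M) := by
          rw [← hI]; exact Submodule.mem_span_singleton_self m
        exact hqQ (Submodule.smul_mono_left hIq hmI)
      obtain ⟨i, hiI, hiq⟩ := SetLike.not_le_iff_exists.mp hInq
      have hcrm' : (c * r) • m = 0 := by rw [mul_smul]; exact hcrm
      have hann : ∀ x : M, (c * r * i) • x = 0 := by
        intro x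
        have hix : i • x ∈ Submodule.span R {m} := by
          rw [hI]; exact Submodule.smul_mem_smul hiI trivial
        obtain ⟨t, ht⟩ := Submodule.mem_span_singleton.mp hix
        rw [mul_smul, ← ht, smul_comm, hcrm', smul_zero]
      rw [Submodule.mem_colon]
      intro x _
      refine ⟨c * i, fun h => (hqprime.mem_or_mem h).elim hc hiq, ?_⟩
      rw [smul_smul, show c * i * r = c * r * i by ring]
      exact hann x
  have hQeqP : Q = P := hP.2 Q hQprime hQP
  have hpq : P.colon ⊤ ≤ q := by
    intro r hr
    by_contra hrq
    apply hQtop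
    rw [eq_top_iff]
    intro x _
    have hrx : r • x ∈ Q := by
      rw [hQeqP]
      exact Submodule.mem_colon.mp hr x trivial
    obtain ⟨e, he, hex⟩ := hrx
    exact ⟨e * r, fun h => (hqprime.mem_or_mem h).elim he hrq, by rw [mul_smul]; exact hex⟩
  have hpeq : P.colon ⊤ = q := le_antisymm hpq hqle
  rw [hpeq]
  exact hqmin

/-- Every prime submodule contains a minimal prime submodule (Zorn). -/
lemma exists_minimalPrime_le {P : Submodule R M} (hP : P.IsPrimeSubmodule) :
    ∃ Q : Submodule R M, Q.IsMinimalPrime ∧ Q ≤ P := by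
  set s : Set (Submodule R M)ᵒᵈ :=
    {Q | (OrderDual.ofDual Q).IsPrimeSubmodule ∧ OrderDual.ofDual Q ≤ P} with hs
  have hzorn := zorn_le_nonempty₀ s ?_ (OrderDual.toDual P) ⟨hP, le_rfl⟩
  · obtain ⟨m, _, hm2⟩ := hzorn
    refine ⟨OrderDual.ofDual m, ⟨hm2.1.1, ?_⟩, hm2.1.2⟩
    intro Q' hQ' hle
    have hQ's : OrderDual.toDual Q' ∈ s := ⟨hQ', hle.trans hm2.1.2⟩
    have hmle : m ≤ OrderDual.toDual Q' := hle
    exact le_antisymm hle (hm2.2 hQ's hmle)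
  · intro c hcs hchain y hy
    set N : Submodule R M := sInf (OrderDual.ofDual '' c) with hN
    have hNy : N ≤ OrderDual.ofDual y := sInf_le ⟨y, hy, rfl⟩
    have hchain' : ∀ A ∈ c, ∀ B ∈ c,
        OrderDual.ofDual A ≤ OrderDual.ofDual B ∨ OrderDual.ofDual B ≤ OrderDual.ofDual A := by
      intro A hA B hB
      rcases eq_or_ne A B with rfl | hne
      · left; exact le_rfl
      · rcases hchain hA hB hne with h | h
        · right; exact h
        · left; exact h
    have hNprime : N.IsPrimeSubmodule := by
      refine ⟨fun h => (hcs hy).1.1 (top_unique (h ▸ hNy)), ?_⟩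
      intro r x hrx
      by_cases hx : x ∈ N
      · left; exact hx
      right
      rw [hN, Submodule.mem_sInf] at hx
      push_neg at hx
      obtain ⟨P₁, hP₁c, hxP₁⟩ := hx
      rw [Submodule.mem_colon]
      intro x₀ _
      by_contra hrx₀
      rw [hN, Submodule.mem_sInf] at hrx₀
      push_neg at hrx₀
      obtain ⟨P₂, hP₂c, hP₂⟩ := hrx₀
      obtain ⟨A₁, hA₁, rfl⟩ := hP₁c
      obtain ⟨A₂, hA₂, rfl⟩ := hP₂c
      rcases hchain' A₁ hA₁ A₂ hA₂ with h | h
      · have hprime := (hcs hA₁).1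
        have hrxA : r • x ∈ OrderDual.ofDual A₁ :=
          Submodule.mem_sInf.mp hrx _ ⟨A₁, hA₁, rfl⟩
        rcases hprime.2 r x hrxA with h' | h'
        · exact hxP₁ h'
        · exact hP₂ (h (Submodule.mem_colon.mp h' x₀ trivial))
      · have hprime := (hcs hA₂).1
        have hrxA : r • x ∈ OrderDual.ofDual A₂ :=
          Submodule.mem_sInf.mp hrx _ ⟨A₂, hA₂, rfl⟩
        rcases hprime.2 r x hrxA with h' | h'
        · exact hxP₁ (h h')
        · exact hP₂ (Submodule.mem_colon.mp h' x₀ trivial)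
    refine ⟨OrderDual.toDual N, ⟨hNprime, hNy.trans (hcs hy).2⟩, ?_⟩
    intro z hz
    exact (sInf_le ⟨z, hz, rfl⟩ : N ≤ OrderDual.ofDual z)

theorem stmt5 (hfaithful : (⊥ : Submodule R M).colon ⊤ = ⊥)
    (hmul : IsMultiplicationModule R M) (hred : IsReducedModule R M) (a : R) :
    pointAnn ((⊥ : Submodule R M).colon ((Ideal.span {a} • (⊤ : Submodule R M) : Submodule R M) : Set M)) =
      primeRad (Ideal.span {a} • (⊤ : Submodule R M)) := by
  have hsq : ∀ r : R, r * r = 0 → r = 0 := sq_zero hfaithful hred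
  set aM := Ideal.span {a} • (⊤ : Submodule R M) with haM
  apply le_antisymm
  · -- pointAnn ≤ primeRad
    intro x hx
    refine Submodule.mem_sInf.mpr ?_
    rintro P ⟨hPmin, haP⟩
    have hp : (P.colon ⊤).IsPrime := colon_isPrime hPmin.1
    have hpmin := colon_mem_minimalPrimes hfaithful hmul hsq hPmin
    have hap : a ∈ P.colon ⊤ :=
      Submodule.mem_colon.mpr fun y _ =>
        haP (Submodule.smul_mem_smul (Ideal.subset_span rfl) trivial)
    obtain ⟨s, hs, hsa⟩ := minPrime_ann hsq hpmin hap
    have hsJ : s ∈ (⊥ : Submodule R M).colon aM := by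
      rw [Submodule.mem_colon]
      intro w hw
      rw [Submodule.mem_bot]
      refine Submodule.smul_induction_on hw ?_ ?_
      · intro r hr y _
        obtain ⟨t, ht⟩ := Ideal.mem_span_singleton'.mp hr
        have hsr : s * r = 0 := by
          rw [← ht, show s * (t * a) = t * (s * a) by ring, hsa, mul_zero]
        rw [smul_smul, hsr, zero_smul]
      · intro y z hy hz
        rw [smul_add, hy, hz, add_zero]
    have hsx : s • x = 0 := hx s hsJ
    rcases hPmin.1.2 s x (by rw [hsx]; exact P.zero_mem) with h | h
    · exact h
    · exact absurd h hs
  · -- primeRad ≤ pointAnn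
    intro x hx
    rw [mem_pointAnn]
    intro j hj
    have hall : ∀ P : Submodule R M, P.IsPrimeSubmodule → j • x ∈ P := by
      intro P hP
      obtain ⟨Q, hQmin, hQP⟩ := exists_minimalPrime_le hP
      refine hQP ?_
      by_cases haQ : aM ≤ Q
      · have hxQ : x ∈ Q := Submodule.mem_sInf.mp hx Q ⟨hQmin, haQ⟩
        exact Q.smul_mem j hxQ
      · obtain ⟨z, hz, hzQ⟩ := SetLike.not_le_iff_exists.mp haQ
        have hjz : j • z = 0 := (Submodule.mem_bot R).mp (Submodule.mem_colon.mp hj z hz)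
        rcases hQmin.1.2 j z (by rw [hjz]; exact Q.zero_mem) with h | h
        · exact absurd h hzQ
        · exact Submodule.mem_colon.mp h x trivial
    have hmem : j • x ∈ sInf {P : Submodule R M | P.IsPrimeSubmodule} :=
      Submodule.mem_sInf.mpr hall
    rw [hred] at hmem
    exact (Submodule.mem_bot R).mp hmem
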